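/- arXiv:2604.22246 — 2 statements merged into one kernel-verified Lean document; each statement's English description precedes it below -/
import Mathlib

section
/- Let V be a real vector space with a symmetric bilinear form Q, let C, ω, α ∈ V, and let k > 0 be a real number. Define Z(k) := ½k²(ω² − α²) + i·k²(ω.α) and Z''(k) := ½(k²ω² − (kα + C)²) + i·k·(ω.(kα + C)). Assume ω.α < 0 and ω.(kα + C) < 0 (so both −Z(k) and −Z''(k) lie in the open upper half-plane). Then arg(−Z(k)) < arg(−Z''(k)) if and only if (C.ω)(ω² − α²) + (2(C.α) + C²/k)(ω.α) > 0. -/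
open Real Complex

private lemma arg_eq_of_im_pos {z : ℂ} (hz : 0 < z.im) :
    Complex.arg z = π / 2 + Real.arctan (-(z.re) / z.im) := by
  have hz0 : z ≠ 0 := fun h => by rw [h] at hz; simp at hz
  have habs : 0 < ‖z‖ := norm_pos_iff.mpr hz0
  set t := Real.arctan (-(z.re) / z.im) with ht
  have ht1 : t ∈ Set.Ioo (-(π/2)) (π/2) := Real.arctan_mem_Ioo _
  have hsq : 1 + (-(z.re) / z.im) ^ 2 = (‖z‖ / z.im) ^ 2 := by
    have h := Complex.sq_norm z
    rw [Complex.normSq_apply] at h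
    field_simp
    nlinarith [h]
  have hsqrt : Real.sqrt (1 + (-(z.re) / z.im) ^ 2) = ‖z‖ / z.im := by
    rw [hsq, Real.sqrt_sq (by positivity)]
  have hcos : Real.cos t = z.im / ‖z‖ := by
    rw [ht, Real.cos_arctan, hsqrt]
    field_simp
  have hsin : Real.sin t = -(z.re) / ‖z‖ := by
    rw [ht, Real.sin_arctan, hsqrt]
    field_simp
  have hmem : π / 2 + t ∈ Set.Ioc (-π) π := by
    constructor <;> nlinarith [ht1.1, ht1.2, Real.pi_pos]
  rw [← Complex.arg_mul_cos_add_sin_mul_I habs hmem]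
  congr 1
  rw [← Complex.ofReal_cos, ← Complex.ofReal_sin]
  apply Complex.ext
  · simp [Real.cos_add, Real.sin_add, hcos, hsin]
    field_simp
  · simp [Real.cos_add, Real.sin_add, hcos, hsin]
    field_simp

private lemma arg_lt_arg_of_im_pos {z w : ℂ} (hz : 0 < z.im) (hw : 0 < w.im) :
    Complex.arg z < Complex.arg w ↔ w.re * z.im < z.re * w.im := by
  rw [arg_eq_of_im_pos hz, arg_eq_of_im_pos hw, add_lt_add_iff_left,
    Real.arctan_strictMono.lt_iff_lt, div_lt_div_iff₀ hz hw]
  constructor <;> intro h <;> linarith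

/-- With `Z(k), Z''(k)` as in the Bridgeland phase comparison, `k > 0`,
`ω.α < 0`, and `ω.(kα + C) < 0`, we have `arg(-Z(k)) < arg(-Z''(k))` iff
`(C.ω)(ω² - α²) + (2(C.α) + C²/k)(ω.α) > 0`. -/
theorem stmt_8 {V : Type*} [AddCommGroup V] [Module ℝ V]
    (Q : V →ₗ[ℝ] V →ₗ[ℝ] ℝ) (hQ : ∀ v w, Q v w = Q w v)
    (C ω α : V) (k : ℝ) (hk : 0 < k)
    (Z Z'' : ℂ)
    (hZ : Z = ((1 / 2 : ℝ) * k ^ 2 * (Q ω ω - Q α α) : ℝ) +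
      (k ^ 2 * Q ω α : ℝ) * Complex.I)
    (hZ'' : Z'' = ((1 / 2 : ℝ) * (k ^ 2 * Q ω ω - Q (k • α + C) (k • α + C)) : ℝ) +
      (k * Q ω (k • α + C) : ℝ) * Complex.I)
    (h1 : Q ω α < 0) (h2 : Q ω (k • α + C) < 0) :
    Complex.arg (-Z) < Complex.arg (-Z'') ↔
      0 < Q C ω * (Q ω ω - Q α α) + (2 * Q C α + Q C C / k) * Q ω α := by
  have hk0 : k ≠ 0 := hk.ne'
  have e1 : Q ω (k • α + C) = k * Q ω α + Q C ω := by
    simp [map_add, map_smul, hQ C ω]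
  have e2 : Q (k • α + C) (k • α + C) =
      k ^ 2 * Q α α + 2 * k * Q C α + Q C C := by
    simp [map_add, map_smul, LinearMap.add_apply, LinearMap.smul_apply, hQ α C]
    ring
  have hre : (-Z).re = -((1 / 2 : ℝ) * k ^ 2 * (Q ω ω - Q α α)) := by
    simp only [hZ, Complex.neg_re, Complex.add_re, Complex.ofReal_re,
      Complex.mul_re, Complex.ofReal_im, Complex.I_re, Complex.I_im,
      mul_zero, mul_one, zero_mul, sub_zero, zero_sub, add_zero]
  have him : (-Z).im = -(k ^ 2 * Q ω α) := by
    simp only [hZ, Complex.neg_im, Complex.add_im, Complex.ofReal_im,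
      Complex.mul_im, Complex.ofReal_re, Complex.I_re, Complex.I_im,
      mul_zero, mul_one, zero_mul, add_zero, zero_add]
  have hre'' : (-Z'').re =
      -((1 / 2 : ℝ) * (k ^ 2 * Q ω ω - Q (k • α + C) (k • α + C))) := by
    simp only [hZ'', Complex.neg_re, Complex.add_re, Complex.ofReal_re,
      Complex.mul_re, Complex.ofReal_im, Complex.I_re, Complex.I_im,
      mul_zero, mul_one, zero_mul, sub_zero, zero_sub, add_zero]
  have him'' : (-Z'').im = -(k * Q ω (k • α + C)) := by
    simp only [hZ'', Complex.neg_im, Complex.add_im, Complex.ofReal_im,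
      Complex.mul_im, Complex.ofReal_re, Complex.I_re, Complex.I_im,
      mul_zero, mul_one, zero_mul, add_zero, zero_add]
  have hz : 0 < (-Z).im := by
    rw [him]
    nlinarith [mul_pos (mul_pos hk hk) (neg_pos.mpr h1)]
  have hw : 0 < (-Z'').im := by
    rw [him'']
    nlinarith [mul_pos hk (neg_pos.mpr h2)]
  rw [arg_lt_arg_of_im_pos hz hw, hre, him, hre'', him'', e1, e2]
  have key : Q C ω * (Q ω ω - Q α α) + (2 * Q C α + Q C C / k) * Q ω α =
      (k * (Q C ω * (Q ω ω - Q α α)) + (2 * k * Q C α + Q C C) * Q ω α) / k := by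
    field_simp
  rw [key, lt_div_iff₀ hk, zero_mul, ← sub_pos]
  rw [show -((1 / 2 : ℝ) * k ^ 2 * (Q ω ω - Q α α)) * -(k * (k * Q ω α + Q C ω)) -
      -((1 / 2 : ℝ) * (k ^ 2 * Q ω ω - (k ^ 2 * Q α α + 2 * k * Q C α + Q C C))) *
        -(k ^ 2 * Q ω α) =
      (k ^ 2 / 2) * (k * (Q C ω * (Q ω ω - Q α α)) +
        (2 * k * Q C α + Q C C) * Q ω α) from by ring]
  exact mul_pos_iff_of_pos_left (by positivity)
end

section
/- Let Q be the symmetric bilinear form on ℝ² defined by Q((x₁,y₁),(x₂,y₂)) = x₁x₂ − y₁y₂, and set ω := (2/√3, −1/√3), α := (1,0). Let a, b be real numbers with b > a ≥ 0, set C := (a,b), and let k ≥ 1 be a real number. Then C² < 0 and (C.ω)(ω² − α²) + (2(C.α) − C²/k)(ω.α) = (2a + (b² − a²)/k)·(2/√3) > 0, where v.w := Q(v,w) and v² := Q(v,v). -/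
/-- On `ℝ²` with `Q((x₁,y₁),(x₂,y₂)) = x₁x₂ - y₁y₂`,
`ω = (2/√3, -1/√3)`, `α = (1,0)`, and `C = (a,b)` with `b > a ≥ 0`, for any real
`k ≥ 1` we have `C² < 0` and
`(C.ω)(ω² - α²) + (2(C.α) - C²/k)(ω.α) = (2a + (b² - a²)/k)·(2/√3) > 0`. -/
theorem stmt_17 (Q : ℝ × ℝ → ℝ × ℝ → ℝ)
    (hQ : ∀ v w : ℝ × ℝ, Q v w = v.1 * w.1 - v.2 * w.2)
    (ω α : ℝ × ℝ)
    (hω : ω = (2 / Real.sqrt 3, -1 / Real.sqrt 3))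
    (hα : α = (1, 0))
    (a b : ℝ) (hab : a < b) (ha : 0 ≤ a)
    (C : ℝ × ℝ) (hC : C = (a, b))
    (k : ℝ) (hk : 1 ≤ k) :
    Q C C < 0 ∧
      Q C ω * (Q ω ω - Q α α) + (2 * Q C α - Q C C / k) * Q ω α
        = (2 * a + (b ^ 2 - a ^ 2) / k) * (2 / Real.sqrt 3) ∧
      0 < (2 * a + (b ^ 2 - a ^ 2) / k) * (2 / Real.sqrt 3) := by
  have h3 : Real.sqrt 3 > 0 := Real.sqrt_pos.mpr (by norm_num)
  have hs : Real.sqrt 3 * Real.sqrt 3 = 3 := Real.mul_self_sqrt (by norm_num)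
  have hk0 : (0:ℝ) < k := lt_of_lt_of_le one_pos hk
  have hb2 : a ^ 2 < b ^ 2 := by nlinarith
  refine ⟨?_, ?_, ?_⟩
  · simp only [hQ, hC]; nlinarith
  · simp only [hQ, hC, hω, hα]
    field_simp
    ring_nf
    rw [Real.sq_sqrt (by norm_num : (0:ℝ) ≤ 3)]
    ring
  · have h1 : 0 < 2 * a + (b ^ 2 - a ^ 2) / k := by
      have : 0 < (b ^ 2 - a ^ 2) / k := div_pos (by linarith) hk0
      linarith
    exact mul_pos h1 (by positivity)
end
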